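/- Suppose a point p in a topological space X satisfies πχ(p,X) < cf(κ) = κ ≤ χ(p,X). Then X has no base B such that every member of B is contained in fewer than κ-many members of B; i.e., the Noetherian type of X exceeds κ. -/

import Mathlib

open Cardinal TopologicalSpace

variable {X : Type u} [TopologicalSpace X]

/-- `B` is a local base at `p`. -/
def IsLocalBase (p : X) (B : Set (Set X)) : Prop :=
  (∀ u ∈ B, IsOpen u ∧ p ∈ u) ∧ ∀ v : Set X, IsOpen v → p ∈ v → ∃ u ∈ B, u ⊆ v

/-- `B` is a local π-base at `p`: a family of nonempty open sets such that every
open neighborhood of `p` contains a member. -/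
def IsLocalPiBase (p : X) (B : Set (Set X)) : Prop :=
  (∀ u ∈ B, IsOpen u ∧ u.Nonempty) ∧ ∀ v : Set X, IsOpen v → p ∈ v → ∃ u ∈ B, u ⊆ v

/-- The π-character of `p` in `X`: least infinite cardinality of a local π-base at `p`. -/
noncomputable def piChar (p : X) : Cardinal.{u} :=
  sInf {c | ∃ B : Set (Set X), IsLocalPiBase p B ∧ c = max #B ℵ₀}

/-- The character of `p` in `X`: least infinite cardinality of a local base at `p`. -/
noncomputable def charPt (p : X) : Cardinal.{u} :=
  sInf {c | ∃ B : Set (Set X), IsLocalBase p B ∧ c = max #B ℵ₀}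

/-- If `πχ(p,X) < cf κ = κ ≤ χ(p,X)`, then `X` has no `κ`-op-like base:
the Noetherian type of `X` exceeds `κ`. -/
theorem no_op_like_base_of_piChar_lt_char (p : X) (κ : Cardinal.{u})
    (h₁ : piChar p < κ.ord.cof) (h₂ : κ.ord.cof = κ) (h₃ : κ ≤ charPt p) :
    ¬ ∃ B : Set (Set X), IsTopologicalBasis B ∧
        ∀ U ∈ B, #{V : Set X // V ∈ B ∧ U ⊂ V} < κ := by
  rintro ⟨B, hB, hop⟩
  -- choose an optimal local π-base A
  have hne : {c | ∃ A : Set (Set X), IsLocalPiBase p A ∧ c = max #A ℵ₀}.Nonempty :=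
    ⟨_, {v | IsOpen v ∧ v.Nonempty},
      ⟨fun u hu => hu, fun v hv hpv => ⟨v, ⟨hv, ⟨p, hpv⟩⟩, subset_rfl⟩⟩, rfl⟩
  obtain ⟨A, hA, hAeq⟩ := csInf_mem hne
  have hApi : #A ≤ piChar p := by rw [piChar, hAeq]; exact le_max_left _ _
  have hAcard : #A < κ.ord.cof := lt_of_le_of_lt hApi h₁
  have hℵκ : ℵ₀ < κ := by
    have : (ℵ₀ : Cardinal) ≤ piChar p := by rw [piChar, hAeq]; exact le_max_right _ _
    calc ℵ₀ ≤ piChar p := this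
      _ < κ.ord.cof := h₁
      _ ≤ κ := h₂.le
  -- the members of B containing p form a local base
  set Bp : Set (Set X) := {U | U ∈ B ∧ p ∈ U} with hBp
  have hBpBase : IsLocalBase p Bp := by
    constructor
    · exact fun u hu => ⟨hB.isOpen hu.1, hu.2⟩
    · intro v hv hpv
      obtain ⟨U, hUB, hpU, hUv⟩ := hB.exists_subset_of_mem_open hpv hv
      exact ⟨U, ⟨hUB, hpU⟩, hUv⟩
  have hκBp : κ ≤ #Bp := by
    have h1 : charPt p ≤ max #Bp ℵ₀ := csInf_le' ⟨Bp, hBpBase, rfl⟩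
    rcases le_max_iff.mp (h₃.trans h1) with h | h
    · exact h
    · exact absurd h (not_le.mpr hℵκ)
  -- selection of π-base elements inside members of Bp
  have hsel : ∀ x : Bp, ∃ a : A, (a : Set X) ⊆ (x : Set X) := by
    rintro ⟨U, hUB, hpU⟩
    obtain ⟨u, hu, hsub⟩ := hA.2 U (hB.isOpen hUB) hpU
    exact ⟨⟨u, hu⟩, hsub⟩
  choose f hf using hsel
  obtain ⟨a, ha⟩ :=
    Cardinal.infinite_pigeonhole_card f κ hκBp hℵκ.le (lt_of_lt_of_le hAcard (le_of_eq rfl))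
  -- a small basic set inside a
  obtain ⟨x₀, hx₀⟩ := (hA.1 a a.2).2
  obtain ⟨V, hVB, hx₀V, hVa⟩ := hB.exists_subset_of_mem_open hx₀ (hA.1 a a.2).1
  set T' : Set Bp := (f ⁻¹' {a}) \ {x : Bp | (x : Set X) = V} with hT'
  have hone : #({x : Bp | (x : Set X) = V} : Set Bp) ≤ 1 := by
    rw [Cardinal.mk_le_one_iff_set_subsingleton]
    intro x hx y hy
    exact Subtype.val_injective (hx.trans hy.symm)
  have hκT' : κ ≤ #T' := by
    by_contra hlt
    push_neg at hlt
    have hsub : (f ⁻¹' {a}) ⊆ T' ∪ {x : Bp | (x : Set X) = V} := by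
      intro x hx
      by_cases h : (x : Set X) = V
      · exact Or.inr h
      · exact Or.inl ⟨hx, h⟩
    have : κ ≤ #T' + 1 :=
      ha.trans ((mk_le_mk_of_subset hsub).trans ((mk_union_le _ _).trans
        (add_le_add_right hone _)))
    exact absurd this (not_le.mpr (Cardinal.add_lt_of_lt hℵκ.le hlt (one_lt_aleph0.trans hℵκ)))
  -- injection from T' into the strict supersets of V in B
  have hinj : κ ≤ #{W : Set X // W ∈ B ∧ V ⊂ W} := by
    refine hκT'.trans (Cardinal.mk_le_of_injective (f := fun x : T' =>
      (⟨(x : Bp), (x : Bp).2.1, ?_⟩ : {W : Set X // W ∈ B ∧ V ⊂ W})) ?_)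
    · -- V ⊂ x
      have hfx : f (x : Bp) = a := x.2.1
      have h1 : (a : Set X) ⊆ ((x : Bp) : Set X) := hfx ▸ hf (x : Bp)
      exact (hVa.trans h1).ssubset_of_ne (fun h => x.2.2 h.symm)
    · intro x y hxy
      simp only [Subtype.mk.injEq] at hxy
      exact Subtype.ext (Subtype.ext hxy)
  exact absurd (hop V hVB) (not_lt.mpr hinj)
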